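/- For every pair of distinct primes p and r with p ≡ r ≡ 1 (mod 3), decomposed in the standard way as p = π·π̄ and r = ρ·ρ̄, one has χ_p(r) = conj(χ_r(p)) · (π/ρ)₃². -/

import Mathlib

/-! ### The Eisenstein integers `ℤ[j]` -/

/-- The Eisenstein integers `ℤ[j]`: elements `a + b·ω` with `a b : ℤ`,
where `ω = j = (−1 + i√3)/2` satisfies `ω² + ω + 1 = 0`. -/
@[ext] structure Eisen where
  re : ℤ
  im : ℤ
deriving DecidableEq

namespace Eisen

instance : Zero Eisen := ⟨⟨0, 0⟩⟩
instance : One Eisen := ⟨⟨1, 0⟩⟩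
instance : Add Eisen := ⟨fun a b => ⟨a.re + b.re, a.im + b.im⟩⟩
instance : Neg Eisen := ⟨fun a => ⟨-a.re, -a.im⟩⟩
/-- `(a+bω)(c+dω) = (ac − bd) + (ad + bc − bd)ω`, using `ω² = −1 − ω`. -/
instance : Mul Eisen := ⟨fun a b =>
  ⟨a.re * b.re - a.im * b.im, a.re * b.im + a.im * b.re - a.im * b.im⟩⟩

@[simp] lemma zero_re : (0 : Eisen).re = 0 := rfl
@[simp] lemma zero_im : (0 : Eisen).im = 0 := rfl
@[simp] lemma one_re : (1 : Eisen).re = 1 := rfl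
@[simp] lemma one_im : (1 : Eisen).im = 0 := rfl
@[simp] lemma add_re (a b : Eisen) : (a + b).re = a.re + b.re := rfl
@[simp] lemma add_im (a b : Eisen) : (a + b).im = a.im + b.im := rfl
@[simp] lemma neg_re (a : Eisen) : (-a).re = -a.re := rfl
@[simp] lemma neg_im (a : Eisen) : (-a).im = -a.im := rfl
@[simp] lemma mul_re (a b : Eisen) : (a * b).re = a.re * b.re - a.im * b.im := rfl
@[simp] lemma mul_im (a b : Eisen) :
    (a * b).im = a.re * b.im + a.im * b.re - a.im * b.im := rfl

instance commRing : CommRing Eisen where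
  add_assoc a b c := by ext <;> simp <;> ring
  zero_add a := by ext <;> simp
  add_zero a := by ext <;> simp
  add_comm a b := by ext <;> simp <;> ring
  neg_add_cancel a := by ext <;> simp
  mul_assoc a b c := by ext <;> simp <;> ring
  one_mul a := by ext <;> simp
  mul_one a := by ext <;> simp
  left_distrib a b c := by ext <;> simp <;> ring
  right_distrib a b c := by ext <;> simp <;> ring
  zero_mul a := by ext <;> simp
  mul_zero a := by ext <;> simp
  mul_comm a b := by ext <;> simp <;> ring
  nsmul := nsmulRec
  zsmul := zsmulRec

/-- The root of unity `ω = j` as an Eisenstein integer. -/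
def ω : Eisen := ⟨0, 1⟩

/-- The complex number `j = (−1 + i√3)/2`. -/
noncomputable def jC : ℂ := ⟨-(1 / 2), Real.sqrt 3 / 2⟩

/-- The canonical embedding `ℤ[j] → ℂ`, sending `a + bω` to `a + b·j`. -/
noncomputable def toComplex (z : Eisen) : ℂ := (z.re : ℂ) + (z.im : ℂ) * jC

/-- The norm `N(z) = z·z̄ = a² − ab + b²` of an Eisenstein integer. -/
def normE (z : Eisen) : ℤ := z.re ^ 2 - z.re * z.im + z.im ^ 2

/-- `π` is a *standard prime*: a prime element of `ℤ[j]` that is primary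
(`π ≡ 2 mod 3`) and has positive imaginary part. These are exactly the elements
arising in the standard decomposition `p = π·π̄` of rational primes `p ≡ 1 (mod 3)`. -/
noncomputable def IsStandardPrime (π : Eisen) : Prop :=
  Prime π ∧ (3 : Eisen) ∣ (π - 2) ∧ 0 < (toComplex π).im

open scoped Classical in
/-- The cubic residue symbol `(α/π)₃ ∈ {1, j, j²}` (or `0` if `π ∣ α`):
the unique power `j^m` with `α^((N(π)−1)/3) ≡ j^m (mod π)`. -/
noncomputable def cubicSym (π α : Eisen) : ℂ :=
  if π ∣ α then 0
  else if π ∣ α ^ (((normE π).toNat - 1) / 3) - 1 then 1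
  else if π ∣ α ^ (((normE π).toNat - 1) / 3) - ω then jC
  else jC ^ 2

open scoped Classical in
/-- The standard prime above a rational prime `p ≡ 1 (mod 3)` (junk value `0` otherwise). -/
noncomputable def stdPrime (p : ℕ) : Eisen :=
  if h : ∃ π : Eisen, IsStandardPrime π ∧ normE π = p then h.choose else 0

end Eisen

/-! ### The cubic Dirichlet characters `χ_p` and the characters `χ(f)` -/

open Eisen

open scoped Classical in
/-- The cubic character `χ_3` modulo `9`, of order 3, normalized by `χ_3(2) = j`. -/
noncomputable def chi3 (n : ℤ) : ℂ :=
  if n % 9 = 1 ∨ n % 9 = 8 then 1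
  else if n % 9 = 2 ∨ n % 9 = 7 then jC
  else if n % 9 = 4 ∨ n % 9 = 5 then jC ^ 2
  else 0

open scoped Classical in
/-- The distinguished cubic character `χ_p` for `p ∈ 𝒫₃`: for `p ≡ 1 (mod 3)` it is
`χ_p(n) = (n/π)₃` with `π` the standard prime above `p`; for `p = 3` it is `χ_3`. -/
noncomputable def chiAt (p : ℕ) (n : ℤ) : ℂ :=
  if p = 3 then chi3 n else cubicSym (stdPrime p) (n : Eisen)

/-- `f` belongs to `V`: a finitely supported function `𝒫₃ → 𝔽₃`
(extended by zero off the set `𝒫₃ = {p prime : p ≡ 0, 1 (mod 3)}`). -/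
def IsV (f : ℕ → ZMod 3) : Prop :=
  {p | f p ≠ 0}.Finite ∧ ∀ p, f p ≠ 0 → p.Prime ∧ (p % 3 = 0 ∨ p % 3 = 1)

/-- `f` belongs to `V*`: it belongs to `V` and `f(3) = 0`. -/
def IsVstar (f : ℕ → ZMod 3) : Prop := IsV f ∧ f 3 = 0

/-- The Dirichlet character `χ(f) = ∏_{p ∈ 𝒫₃} χ_p^{f(p)}` attached to `f ∈ V`. -/
noncomputable def chiF (f : ℕ → ZMod 3) (n : ℤ) : ℂ :=
  ∏ᶠ p : ℕ, chiAt p n ^ (f p).val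

/-- `supp₃ f`: the support of `f` restricted to the primes `≡ 1 (mod 3)`. -/
def supp3 (f : ℕ → ZMod 3) : Set ℕ := {p | f p ≠ 0 ∧ p % 3 = 1}

/-- `Δ(f)`: the product of the primes in `supp₃ f`. -/
noncomputable def Deltaf (f : ℕ → ZMod 3) : ℕ := ∏ᶠ p ∈ supp3 f, p

open scoped Classical in
/-- The quantity `𝟙(f, f')`. -/
noncomputable def indicFF (f f' : ℕ → ZMod 3) : ℂ :=
  (3 : ℂ) ^ (-(Set.ncard (supp3 f ∪ supp3 f') : ℤ)) *
    ∏ r ∈ (Deltaf f * Deltaf f').primeFactors,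
      ∑ zz ∈ Finset.univ.filter
          (fun zz : ZMod 3 × ZMod 3 => f r * zz.1 + f' r * zz.2 = 0),
        chiF (fun p => zz.1 * f p + zz.2 * f' p) (r : ℤ)

namespace CubicRec
open Eisen

/-- conjugation on Eisen -/
def conjE (z : Eisen) : Eisen := ⟨z.re - z.im, -z.im⟩

lemma intCast_eisen (n : ℤ) : ((n : ℤ) : Eisen) = ⟨n, 0⟩ := by
  induction n using Int.induction_on with
  | zero => rfl
  | succ k ih => rw [Int.cast_add, Int.cast_one, ih]; ext <;> simp
  | pred k ih => rw [Int.cast_sub, Int.cast_one, ih]; ext <;> simp [sub_eq_add_neg]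

lemma mul_conjE (z : Eisen) : z * conjE z = ((normE z : ℤ) : Eisen) := by
  rw [intCast_eisen]
  ext <;> simp [conjE, normE] <;> ring

lemma normE_mul (z w : Eisen) : normE (z * w) = normE z * normE w := by
  simp [normE]; ring

lemma normE_dvd {z w : Eisen} (h : z ∣ w) : normE z ∣ normE w := by
  obtain ⟨t, rfl⟩ := h
  exact ⟨normE t, normE_mul z t⟩

lemma omega_cube : (ω : Eisen) ^ 3 = 1 := by
  ext <;> simp [pow_succ, ω] 

lemma omega_sq : (ω : Eisen) ^ 2 = ⟨-1, -1⟩ := by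
  ext <;> simp [pow_succ, ω]

lemma omega_ne_one : (ω : Eisen) ≠ 1 := by
  intro h
  have := congrArg Eisen.re h
  simp [ω] at this

lemma omega_sq_ne_one : (ω : Eisen) ^ 2 ≠ 1 := by
  rw [omega_sq]
  intro h
  have := congrArg Eisen.re h
  simp at this

end CubicRec
namespace CubicRec
open Eisen Complex

lemma jC_re : jC.re = -(1/2) := rfl
lemma jC_im : jC.im = Real.sqrt 3 / 2 := rfl

lemma jC_sq : jC ^ 2 + jC + 1 = 0 := by
  have h3 : Real.sqrt 3 ^ 2 = 3 := Real.sq_sqrt (by norm_num)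
  apply Complex.ext
  · simp [pow_two, Complex.add_re, Complex.mul_re, jC_re, jC_im]
    nlinarith [h3]
  · simp [pow_two, Complex.add_im, Complex.mul_im, jC_re, jC_im]
    ring

lemma toComplex_mk (a b : ℤ) : toComplex ⟨a, b⟩ = (a : ℂ) + (b : ℂ) * jC := rfl

/-- `toComplex` as a ring hom. -/
noncomputable def toC : Eisen →+* ℂ where
  toFun := toComplex
  map_one' := by simp [toComplex]
  map_mul' z w := by
    simp only [toComplex, Eisen.mul_re, Eisen.mul_im]
    push_cast
    linear_combination (-(z.im * w.im) : ℂ) * jC_sq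
  map_zero' := by simp [toComplex]
  map_add' z w := by
    simp only [toComplex, Eisen.add_re, Eisen.add_im]
    push_cast
    ring

lemma toC_apply (z : Eisen) : toC z = toComplex z := rfl

lemma jC_im_ne : jC.im ≠ 0 := by
  simp only [jC_im]
  positivity

lemma toC_injective : Function.Injective toC := by
  intro z w h
  simp only [toC_apply, toComplex] at h
  have him := congrArg Complex.im h
  have hre := congrArg Complex.re h
  simp only [Complex.add_im, Complex.add_re, Complex.mul_im, Complex.mul_re,
    Complex.intCast_re, Complex.intCast_im] at him hre
  have h1 : (z.im : ℝ) * jC.im = (w.im : ℝ) * jC.im := by linarith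
  have h2 : z.im = w.im := by
    have := mul_right_cancel₀ jC_im_ne h1
    exact_mod_cast this
  have h1' : (z.im : ℝ) = w.im := by exact_mod_cast h2
  have h3 : (z.re : ℝ) = w.re := by
    rw [h1'] at hre; linarith
  have h4 : z.re = w.re := by exact_mod_cast h3
  ext <;> assumption

instance : IsDomain Eisen := Function.Injective.isDomain toC toC_injective

lemma toC_conjE (z : Eisen) : toC (conjE z) = (starRingEnd ℂ) (toC z) := by
  have h3 : Real.sqrt 3 ^ 2 = 3 := Real.sq_sqrt (by norm_num)
  simp only [toC_apply, conjE, toComplex]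
  apply Complex.ext <;>
    simp [Complex.add_re, Complex.add_im, Complex.mul_re, Complex.mul_im, jC_re, jC_im] <;> ring

lemma toC_omega : toC ω = jC := by simp [toC_apply, ω, toComplex]

lemma jC_mul_conj : jC * (starRingEnd ℂ) jC = 1 := by
  have h3 : Real.sqrt 3 ^ 2 = 3 := Real.sq_sqrt (by norm_num)
  apply Complex.ext <;> simp [Complex.mul_re, Complex.mul_im, jC_re, jC_im] <;> nlinarith [h3]

end CubicRec
namespace CubicRec
open Eisen

section ResField

variable {p : ℕ} {π : Eisen}

/-- The image of `ω` in `ZMod p` determined by `π`. -/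
noncomputable def cval (π : Eisen) (p : ℕ) : ZMod p := -(π.re : ZMod p) * (π.im : ZMod p)⁻¹

variable [Fact p.Prime] (hn : normE π = (p : ℤ))

include hn

lemma normE_expand : π.re ^ 2 - π.re * π.im + π.im ^ 2 = (p : ℤ) := by
  rw [← hn]; simp [normE]

lemma not_dvd_im : ¬ ((p : ℤ) ∣ π.im) := by
  intro hdvd
  have hp := (Fact.out : p.Prime)
  obtain ⟨b, hb⟩ := hdvd
  have hre : (p : ℤ) ∣ π.re := by
    have h2 : (p:ℤ) ∣ π.re ^ 2 := by
      refine ⟨1 + π.re * b - p * b ^ 2, ?_⟩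
      linear_combination normE_expand hn + (π.re - π.im - (p:ℤ)*b) * hb
    exact Int.Prime.dvd_pow' hp h2
  obtain ⟨a, ha⟩ := hre
  have hk : (p : ℤ) * (p * (a ^ 2 - a * b + b ^ 2)) = p * 1 := by
    rw [mul_one]
    linear_combination normE_expand hn - ((p:ℤ)*a + π.re - π.im) * ha -
      ((p:ℤ)*b + π.im - (p:ℤ)*a) * hb
  have hp0 : (p : ℤ) ≠ 0 := by exact_mod_cast hp.ne_zero
  have hcan := mul_left_cancel₀ hp0 hk
  have h1 : (p : ℤ) ∣ 1 := ⟨_, hcan.symm⟩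
  have h2 : p ∣ 1 := by exact_mod_cast h1
  exact hp.ne_one (Nat.dvd_one.mp h2)

lemma im_ne_zero : (π.im : ZMod p) ≠ 0 := by
  rw [Ne, ZMod.intCast_zmod_eq_zero_iff_dvd]
  exact not_dvd_im hn

lemma cval_sol : (π.re : ZMod p) + (π.im : ZMod p) * cval π p = 0 := by
  rw [cval, ← mul_assoc, mul_comm (π.im : ZMod p), mul_assoc,
    mul_inv_cancel₀ (im_ne_zero hn), mul_one]
  ring

lemma cval_sq : cval π p ^ 2 + cval π p + 1 = 0 := by
  have h0 : (π.re : ZMod p) ^ 2 - π.re * π.im + π.im ^ 2 = 0 := by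
    have h := congrArg (Int.cast : ℤ → ZMod p) (normE_expand hn)
    push_cast at h
    rwa [ZMod.natCast_self] at h
  have ha : (π.re : ZMod p) = -(π.im : ZMod p) * cval π p := by
    linear_combination cval_sol hn
  rw [ha] at h0
  have h1 : (π.im : ZMod p) ^ 2 * (cval π p ^ 2 + cval π p + 1) = 0 := by
    linear_combination h0
  rcases mul_eq_zero.mp h1 with h | h
  · exact absurd (pow_eq_zero_iff (by norm_num)|>.mp h) (im_ne_zero hn)
  · exact h

/-- The residue homomorphism `Eisen →+* ZMod p` sending `ω` to `cval π p`. -/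
noncomputable def residue : Eisen →+* ZMod p where
  toFun z := (z.re : ZMod p) + (z.im : ZMod p) * cval π p
  map_one' := by simp
  map_zero' := by simp
  map_add' z w := by push_cast [Eisen.add_re, Eisen.add_im]; ring
  map_mul' z w := by
    push_cast [Eisen.mul_re, Eisen.mul_im]
    linear_combination (-((z.im : ZMod p) * (w.im : ZMod p))) * cval_sq hn

lemma residue_apply (z : Eisen) :
    residue hn z = (z.re : ZMod p) + (z.im : ZMod p) * cval π p := rfl

lemma residue_pi : residue hn π = 0 := cval_sol hn

lemma residue_omega : residue hn ω = cval π p := by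
  simp [residue_apply, ω]

lemma pi_dvd_p : π ∣ ((p : ℤ) : Eisen) := ⟨conjE π, by rw [← hn, ← mul_conjE]⟩

lemma dvd_of_residue_eq_zero (hπ : Prime π) {z : Eisen} (hz : residue hn z = 0) :
    π ∣ z := by
  have hp := (Fact.out : p.Prime)
  set c : ZMod p := cval π p with hc
  set c₀ : ℤ := (c.val : ℤ) with hc₀
  have hcast : ((c₀ : ℤ) : ZMod p) = c := by
    rw [hc₀]
    push_cast
    simp [ZMod.natCast_val, ZMod.cast_id']
  have key : ∀ w : Eisen, residue hn w = 0 → (p : ℤ) ∣ w.re + w.im * c₀ := by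
    intro w hw
    rw [← ZMod.intCast_zmod_eq_zero_iff_dvd]
    push_cast
    rw [hcast]
    exact hw
  have hπim : ¬ π ∣ ((π.im : ℤ) : Eisen) := by
    intro hdvd
    have h1 := normE_dvd hdvd
    rw [hn, intCast_eisen] at h1
    have h2 : (p : ℤ) ∣ π.im ^ 2 := by simpa [normE] using h1
    exact not_dvd_im hn (Int.Prime.dvd_pow' hp h2)
  have homega : π ∣ (ω - ((c₀ : ℤ) : Eisen)) := by
    have heq : ((π.im : ℤ) : Eisen) * (ω - ((c₀ : ℤ) : Eisen)) =
        π - (((π.re + π.im * c₀ : ℤ)) : Eisen) := by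
      ext <;> simp [intCast_eisen, sub_eq_add_neg, ω] <;> ring
    have hd : π ∣ ((π.im : ℤ) : Eisen) * (ω - ((c₀ : ℤ) : Eisen)) := by
      rw [heq]
      refine dvd_sub dvd_rfl ?_
      exact dvd_trans (pi_dvd_p hn) (map_dvd (Int.castRingHom Eisen) (key π (residue_pi hn)))
    rcases hπ.2.2 _ _ hd with h | h
    · exact absurd h hπim
    · exact h
  have hzeq : z = (((z.re + z.im * c₀ : ℤ)) : Eisen)
      + ((z.im : ℤ) : Eisen) * (ω - ((c₀ : ℤ) : Eisen)) := by
    ext <;> simp [intCast_eisen, sub_eq_add_neg, ω] <;> ring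
  rw [hzeq]
  exact dvd_add
    (dvd_trans (pi_dvd_p hn) (map_dvd (Int.castRingHom Eisen) (key z hz)))
    (dvd_mul_of_dvd_right homega _)

lemma residue_eq_zero_iff (hπ : Prime π) {z : Eisen} :
    residue hn z = 0 ↔ π ∣ z := by
  refine ⟨dvd_of_residue_eq_zero hn hπ, ?_⟩
  rintro ⟨t, rfl⟩
  rw [map_mul, residue_pi hn, zero_mul]

end ResField
end CubicRec
namespace CubicRec
open Eisen

section Char

variable {p : ℕ} {π : Eisen}

/-- The index of `x^((p-1)/3)` in `{1, ζ, ζ²}`. -/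
noncomputable def idx (π : Eisen) (p : ℕ) (x : ZMod p) : ℕ :=
  if x ^ ((p - 1) / 3) = 1 then 0 else if x ^ ((p - 1) / 3) = cval π p then 1 else 2

lemma idx_lt (x : ZMod p) : idx π p x < 3 := by
  unfold idx; split_ifs <;> norm_num

variable [Fact p.Prime] (hn : normE π = (p : ℤ)) (hp3 : p % 3 = 1)

include hn hp3

lemma p_big : 7 ≤ p := by
  have hp := (Fact.out : p.Prime)
  by_contra h
  push_neg at h
  interval_cases p <;> revert hp <;> simp_all <;> norm_num

lemma e_mul : (p - 1) / 3 * 3 = p - 1 := by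
  have := p_big hn hp3
  omega

lemma e_pos : 0 < (p - 1) / 3 := by
  have := p_big hn hp3
  omega

lemma e_lt : (p - 1) / 3 < p - 1 := by
  have := p_big hn hp3
  omega

lemma cval_cube : cval π p ^ 3 = 1 := by
  linear_combination (cval π p - 1) * cval_sq hn

lemma cval_ne_one : cval π p ≠ 1 := by
  intro h
  have h2 := cval_sq hn
  rw [h] at h2
  norm_num at h2
  have h3 : ((3 : ℕ) : ZMod p) = 0 := by push_cast; linear_combination h2
  rw [ZMod.natCast_eq_zero_iff] at h3
  have hp := (Fact.out : p.Prime)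
  have := (Nat.prime_dvd_prime_iff_eq hp (by norm_num)).mp h3
  omega

lemma cval_sq_ne_one : cval π p ^ 2 ≠ 1 := by
  intro h
  have := cval_cube hn hp3
  have h1 : cval π p = 1 := by
    linear_combination this - cval π p * h
  exact cval_ne_one hn hp3 h1

lemma orderOf_cval : orderOf (cval π p) = 3 := by
  haveI : Fact (Nat.Prime 3) := ⟨by norm_num⟩
  exact orderOf_eq_prime (cval_cube hn hp3) (cval_ne_one hn hp3)

lemma cval_pow_inj {i j : ℕ} (hi : i < 3) (hj : j < 3)
    (h : cval π p ^ i = cval π p ^ j) : i = j := by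
  have := pow_injOn_Iio_orderOf (x := cval π p)
    (by rw [orderOf_cval hn hp3]; exact hi) (by rw [orderOf_cval hn hp3]; exact hj) h
  exact this

lemma cube_root_cases {y : ZMod p} (hy : y ^ 3 = 1) :
    y = 1 ∨ y = cval π p ∨ y = cval π p ^ 2 := by
  set ζ := cval π p
  have hζ := cval_sq hn
  have hζ3 := cval_cube hn hp3
  have hT : (y - 1) * (y - ζ) * (y - ζ ^ 2) = 0 := by
    linear_combination hy + (y - y ^ 2) * hζ + (y - 1) * hζ3
  rcases mul_eq_zero.mp hT with h | h
  · rcases mul_eq_zero.mp h with h' | h'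
    · exact Or.inl (sub_eq_zero.mp h')
    · exact Or.inr (Or.inl (sub_eq_zero.mp h'))
  · exact Or.inr (Or.inr (sub_eq_zero.mp h))

lemma pow_e_cube {x : ZMod p} (hx : x ≠ 0) : (x ^ ((p - 1) / 3)) ^ 3 = 1 := by
  rw [← pow_mul, e_mul hn hp3]
  exact ZMod.pow_card_sub_one_eq_one hx

lemma cval_pow_idx {x : ZMod p} (hx : x ≠ 0) :
    cval π p ^ idx π p x = x ^ ((p - 1) / 3) := by
  unfold idx
  split_ifs with h1 h2
  · rw [pow_zero, h1]
  · rw [pow_one, h2]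
  · rcases cube_root_cases hn hp3 (pow_e_cube hn hp3 hx) with h | h | h
    · exact absurd h h1
    · exact absurd h h2
    · rw [h]

/-- The cubic residue character attached to `π`, with values in `Eisen`. -/
noncomputable def chiPi : MulChar (ZMod p) Eisen where
  toFun x := if x = 0 then 0 else ω ^ idx π p x
  map_one' := by
    have h1 : (1 : ZMod p) ≠ 0 := one_ne_zero
    simp only [h1, if_false]
    have : idx π p 1 = 0 := by unfold idx; simp
    rw [this, pow_zero]
  map_mul' x y := by
    rcases eq_or_ne x 0 with rfl | hx
    · simp
    rcases eq_or_ne y 0 with rfl | hy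
    · simp
    have hxy : x * y ≠ 0 := mul_ne_zero hx hy
    simp only [hxy, hx, hy, if_false]
    rw [← pow_add]
    have hω3 : (ω : Eisen) ^ 3 = 1 := omega_cube
    have hmod : (ω : Eisen) ^ (idx π p x + idx π p y) =
        ω ^ ((idx π p x + idx π p y) % 3) := by
      conv_lhs => rw [← Nat.div_add_mod (idx π p x + idx π p y) 3]
      rw [pow_add, pow_mul, hω3, one_pow, one_mul]
    rw [hmod]
    congr 1
    apply cval_pow_inj hn hp3 (idx_lt _) (Nat.mod_lt _ (by norm_num))
    rw [cval_pow_idx hn hp3 hxy]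
    have hmodζ : cval π p ^ ((idx π p x + idx π p y) % 3) =
        cval π p ^ (idx π p x + idx π p y) := by
      conv_rhs => rw [← Nat.div_add_mod (idx π p x + idx π p y) 3]
      rw [pow_add, pow_mul, cval_cube hn hp3, one_pow, one_mul]
    rw [hmodζ, pow_add, cval_pow_idx hn hp3 hx, cval_pow_idx hn hp3 hy, mul_pow]
  map_nonunit' x hx := by
    have : x = 0 := by
      by_contra h
      exact hx (isUnit_iff_ne_zero.mpr h)
    simp [this]

lemma chiPi_apply_ne {x : ZMod p} (hx : x ≠ 0) :
    chiPi hn hp3 x = ω ^ idx π p x := by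
  show (if x = 0 then 0 else ω ^ idx π p x) = _
  rw [if_neg hx]

lemma chiPi_zero : chiPi hn hp3 (0 : ZMod p) = 0 := by
  show (if (0 : ZMod p) = 0 then _ else _) = _
  rw [if_pos rfl]

lemma residue_chiPi (x : ZMod p) :
    residue hn (chiPi hn hp3 x) = x ^ ((p - 1) / 3) := by
  rcases eq_or_ne x 0 with rfl | hx
  · rw [chiPi_zero, map_zero, eq_comm, zero_pow]
    have := e_pos hn hp3
    omega
  · rw [chiPi_apply_ne hn hp3 hx, map_pow, residue_omega, cval_pow_idx hn hp3 hx]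

lemma chiPi_cube : chiPi hn hp3 ^ 3 = 1 := by
  apply MulChar.ext
  intro a
  rw [MulChar.pow_apply' _ (by norm_num), MulChar.one_apply_coe]
  have ha : (a : ZMod p) ≠ 0 := a.ne_zero
  rw [chiPi_apply_ne hn hp3 ha, ← pow_mul, mul_comm, pow_mul, omega_cube, one_pow]

lemma exists_nonresidue : ∃ x : ZMod p, x ≠ 0 ∧ x ^ ((p - 1) / 3) ≠ 1 := by
  obtain ⟨g, hg⟩ := IsCyclic.exists_generator (α := (ZMod p)ˣ)
  refine ⟨(g : ZMod p), g.ne_zero, ?_⟩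
  intro h
  have hu : g ^ ((p - 1) / 3) = 1 := by
    ext
    push_cast
    exact h
  have hord : orderOf g = p - 1 := by
    rw [orderOf_eq_card_of_forall_mem_zpowers hg, Nat.card_eq_fintype_card, ZMod.card_units]
  have hdvd := orderOf_dvd_of_pow_eq_one hu
  rw [hord] at hdvd
  have := Nat.le_of_dvd (e_pos hn hp3) hdvd
  have := e_lt hn hp3
  omega

lemma chiPi_ne_one : chiPi hn hp3 ≠ 1 := by
  obtain ⟨x, hx, hxe⟩ := exists_nonresidue hn hp3
  intro h
  have h1 : chiPi hn hp3 x = 1 := by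
    rw [h]
    exact MulChar.one_apply (isUnit_iff_ne_zero.mpr hx)
  rw [chiPi_apply_ne hn hp3 hx] at h1
  have h2 : residue hn ((ω : Eisen) ^ idx π p x) = residue hn 1 := by rw [h1]
  rw [map_pow, residue_omega, map_one, ← pow_zero (cval π p)] at h2
  have := cval_pow_inj hn hp3 (idx_lt x) (by norm_num) h2
  unfold idx at this
  split_ifs at this with h3 h4 <;> simp_all

end Char
end CubicRec
namespace CubicRec
open Eisen

section Jacobi

variable {p : ℕ} {π : Eisen} [Fact p.Prime] (hn : normE π = (p : ℤ)) (hp3 : p % 3 = 1)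

include hn hp3

lemma residue_jacobiSum :
    residue hn (jacobiSum (chiPi hn hp3) (chiPi hn hp3)) = 0 := by
  set e := (p - 1) / 3 with he
  have hmap : residue hn (jacobiSum (chiPi hn hp3) (chiPi hn hp3)) =
      ∑ x : ZMod p, x ^ e * (1 - x) ^ e := by
    rw [jacobiSum, map_sum]
    refine Finset.sum_congr rfl fun x _ => ?_
    rw [map_mul, residue_chiPi hn hp3, residue_chiPi hn hp3]
  rw [hmap]
  have expand : ∀ x : ZMod p, x ^ e * (1 - x) ^ e =
      ∑ j ∈ Finset.range (e + 1), (-1 : ZMod p) ^ j * (e.choose j : ZMod p) * x ^ (e + j) := by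
    intro x
    rw [sub_eq_add_neg, add_comm, add_pow, Finset.mul_sum]
    refine Finset.sum_congr rfl fun j hj => ?_
    rw [neg_pow]
    ring
  rw [Finset.sum_congr rfl fun x _ => expand x, Finset.sum_comm]
  refine Finset.sum_eq_zero fun j hj => ?_
  rw [← Finset.mul_sum]
  have hj' : j < e + 1 := Finset.mem_range.mp hj
  have hcard : Fintype.card (ZMod p) = p := ZMod.card p
  have hbound : e + j < Fintype.card (ZMod p) - 1 := by
    rw [hcard]
    have h1 := e_mul hn hp3
    have h2 := p_big hn hp3
    omega
  rw [FiniteField.sum_pow_lt_card_sub_one (K := ZMod p) (e + j) hbound, mul_zero]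

/-- The complex-valued cubic character. -/
noncomputable def chiC : MulChar (ZMod p) ℂ := (chiPi hn hp3).ringHomComp toC

lemma chiC_mul_conj {x : ZMod p} (hx : x ≠ 0) :
    chiC hn hp3 x * (starRingEnd ℂ) (chiC hn hp3 x) = 1 := by
  rw [chiC, MulChar.ringHomComp_apply, ← toC_conjE, ← map_mul, chiPi_apply_ne hn hp3 hx]
  have hconj : (ω : Eisen) ^ idx π p x * conjE ((ω : Eisen) ^ idx π p x) = 1 := by
    rw [mul_conjE]
    have hnorm : normE ((ω : Eisen) ^ idx π p x) = 1 := by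
      have : ∀ k : ℕ, normE ((ω : Eisen) ^ k) = 1 := by
        intro k
        induction k with
        | zero => simp [normE]
        | succ m ih => rw [pow_succ, normE_mul, ih, one_mul]; simp [normE, ω]
      exact this _
    rw [hnorm]
    norm_num
  rw [hconj, map_one]

lemma chiC_inv_eq_conj (x : ZMod p) :
    (chiC hn hp3)⁻¹ x = (starRingEnd ℂ) (chiC hn hp3 x) := by
  rcases eq_or_ne x 0 with rfl | hx
  · rw [MulChar.map_nonunit _ (by simp), MulChar.map_nonunit _ (by simp), map_zero]
  · rw [MulChar.inv_apply' ]
    have h1 : chiC hn hp3 x * chiC hn hp3 x⁻¹ = 1 := by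
      rw [← map_mul, mul_inv_cancel₀ hx, MulChar.map_one]
    have h2 : chiC hn hp3 x * (starRingEnd ℂ) (chiC hn hp3 x) = 1 := chiC_mul_conj hn hp3 hx
    have hne : chiC hn hp3 x ≠ 0 := by
      intro h0
      rw [h0, zero_mul] at h1
      exact one_ne_zero h1.symm
    exact mul_left_cancel₀ hne (h1.trans h2.symm)

lemma chiC_ne_one : chiC hn hp3 ≠ 1 :=
  (MulChar.ringHomComp_ne_one_iff toC_injective).mpr (chiPi_ne_one hn hp3)

lemma chiC_cube : chiC hn hp3 ^ 3 = 1 := by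
  rw [chiC, MulChar.ringHomComp_pow, chiPi_cube hn hp3]
  ext a
  simp [MulChar.ringHomComp_apply]

lemma chiC_sq_ne_one : chiC hn hp3 * chiC hn hp3 ≠ 1 := by
  intro h
  have h3 := chiC_cube hn hp3
  have h4 : chiC hn hp3 ^ 3 = chiC hn hp3 * chiC hn hp3 * chiC hn hp3 := by
    rw [pow_succ, pow_two]
  rw [h3, h, one_mul] at h4
  exact chiC_ne_one hn hp3 h4.symm

lemma normE_jacobiSum : normE (jacobiSum (chiPi hn hp3) (chiPi hn hp3)) = (p : ℤ) := by
  have hchar : ringChar ℂ ≠ ringChar (ZMod p) := by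
    rw [ringChar.eq_zero, ZMod.ringChar_zmod_n]
    exact fun h => (Fact.out : p.Prime).ne_zero h.symm
  have key := jacobiSum_mul_jacobiSum_inv hchar (chiC_ne_one hn hp3) (chiC_ne_one hn hp3)
    (chiC_sq_ne_one hn hp3)
  have hconjJ : jacobiSum (chiC hn hp3)⁻¹ (chiC hn hp3)⁻¹ =
      (starRingEnd ℂ) (jacobiSum (chiC hn hp3) (chiC hn hp3)) := by
    rw [jacobiSum, jacobiSum, map_sum]
    refine Finset.sum_congr rfl fun x _ => ?_
    rw [map_mul, chiC_inv_eq_conj hn hp3, chiC_inv_eq_conj hn hp3]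
  rw [hconjJ] at key
  have hJC : jacobiSum (chiC hn hp3) (chiC hn hp3) =
      toC (jacobiSum (chiPi hn hp3) (chiPi hn hp3)) := by
    rw [chiC, jacobiSum_ringHomComp]
  rw [hJC, ← toC_conjE, ← map_mul, mul_conjE] at key
  have : ((normE (jacobiSum (chiPi hn hp3) (chiPi hn hp3)) : ℤ) : ℂ) = ((p : ℤ) : ℂ) := by
    rw [← map_intCast toC, key, ZMod.card]
    push_cast
    ring
  exact_mod_cast this

end Jacobi
end CubicRec
namespace CubicRec
open Eisen

lemma isPrimitiveRoot_omega : IsPrimitiveRoot (ω : Eisen) 3 := by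
  refine ⟨omega_cube, fun l hl => ?_⟩
  have hmod : (ω : Eisen) ^ (l % 3) = 1 := by
    conv at hl => rw [← Nat.div_add_mod l 3]
    rw [pow_add, pow_mul, omega_cube, one_pow, one_mul] at hl
    exact hl
  have h3 : l % 3 = 0 ∨ l % 3 = 1 ∨ l % 3 = 2 := by omega
  rcases h3 with h | h | h
  · omega
  · rw [h, pow_one] at hmod
    exact absurd hmod omega_ne_one
  · rw [h] at hmod
    exact absurd hmod omega_sq_ne_one

lemma three_eisen : (3 : Eisen) = ⟨3, 0⟩ := by
  have := intCast_eisen 3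
  exact_mod_cast this

lemma three_dvd_iff (z : Eisen) : (3 : Eisen) ∣ z ↔ (3 : ℤ) ∣ z.re ∧ (3 : ℤ) ∣ z.im := by
  constructor
  · rintro ⟨w, rfl⟩
    rw [three_eisen]
    constructor
    · exact ⟨w.re, by simp⟩
    · exact ⟨w.im, by simp⟩
  · rintro ⟨⟨a, ha⟩, ⟨b, hb⟩⟩
    refine ⟨⟨a, b⟩, ?_⟩
    rw [three_eisen]
    ext <;> simp [ha, hb]

lemma norm_one_units {t : Eisen} (h : normE t = 1) :
    t = 1 ∨ t = -1 ∨ t = ω ∨ t = -ω ∨ t = ⟨1, 1⟩ ∨ t = ⟨-1, -1⟩ := by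
  have hexp : t.re ^ 2 - t.re * t.im + t.im ^ 2 = 1 := by
    rw [← h]; simp [normE]
  have hb : (2 * t.re - t.im) ^ 2 + 3 * t.im ^ 2 = 4 := by linear_combination 4 * hexp
  have him : t.im = -1 ∨ t.im = 0 ∨ t.im = 1 := by
    have hle : -1 ≤ t.im ∧ t.im ≤ 1 := by
      constructor <;> nlinarith [sq_nonneg (2 * t.re - t.im)]
    omega
  rcases him with h1 | h1 | h1
  · have hre : t.re * (t.re + 1) = 0 := by rw [h1] at hexp; linear_combination hexp
    rcases mul_eq_zero.mp hre with h2 | h2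
    · exact Or.inr (Or.inr (Or.inr (Or.inl (by ext <;> simp [ω, h1, h2]))))
    · have h2' : t.re = -1 := by linarith
      exact Or.inr (Or.inr (Or.inr (Or.inr (Or.inr (by ext <;> simp [h1, h2'])))))
  · have hre : t.re * t.re = 1 := by rw [h1] at hexp; linear_combination hexp
    rcases Int.isUnit_iff.mp (IsUnit.of_mul_eq_one _ hre) with h2 | h2
    · exact Or.inl (by ext <;> simp [h1, h2])
    · exact Or.inr (Or.inl (by ext <;> simp [h1, h2]))
  · have hre : t.re * (t.re - 1) = 0 := by rw [h1] at hexp; linear_combination hexp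
    rcases mul_eq_zero.mp hre with h2 | h2
    · exact Or.inr (Or.inr (Or.inl (by ext <;> simp [ω, h1, h2])))
    · have h2' : t.re = 1 := by linarith
      exact Or.inr (Or.inr (Or.inr (Or.inr (Or.inl (by ext <;> simp [h1, h2'])))))

section JacobiPi

variable {p : ℕ} {π : Eisen} [Fact p.Prime] (hn : normE π = (p : ℤ)) (hp3 : p % 3 = 1)

include hn hp3

lemma jacobiSum_eq_pi (hπ : Prime π) (hprim : (3 : Eisen) ∣ (π - 2)) :
    jacobiSum (chiPi hn hp3) (chiPi hn hp3) = π := by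
  set J := jacobiSum (chiPi hn hp3) (chiPi hn hp3) with hJ
  have hdvd : π ∣ J := dvd_of_residue_eq_zero hn hπ (residue_jacobiSum hn hp3)
  obtain ⟨t, ht⟩ := hdvd
  have hnormt : normE t = 1 := by
    have h1 : normE J = (p : ℤ) := normE_jacobiSum hn hp3
    rw [ht, normE_mul, hn] at h1
    have hp0 : (p : ℤ) ≠ 0 := by
      exact_mod_cast (Fact.out : p.Prime).ne_zero
    have h2 : (p : ℤ) * normE t = (p : ℤ) * 1 := by rw [mul_one]; exact h1
    exact mul_left_cancel₀ hp0 h2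
  -- J ≡ -1 mod 3
  have hJ3 : (3 : Eisen) ∣ J + 1 := by
    obtain ⟨z, hz, hzeq⟩ := exists_jacobiSum_eq_neg_one_add (by norm_num : 2 < 3)
      (chiPi_cube hn hp3) (chiPi_cube hn hp3)
      (by rw [ZMod.card]; omega) isPrimitiveRoot_omega
    refine ⟨z * (-ω), ?_⟩
    rw [← hJ] at hzeq
    have homega : ((ω : Eisen) - 1) ^ 2 = 3 * (-ω) := by
      rw [three_eisen]
      ext <;> simp [pow_two, ω, sub_eq_add_neg]
    rw [hzeq, homega]
    ring
  -- hence 3 ∣ 2t + 1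
  have ht3 : (3 : Eisen) ∣ 2 * t + 1 := by
    have h1 : J + 1 = t * (π - 2) + (2 * t + 1) := by rw [ht]; ring
    have h2 := dvd_sub hJ3 (Dvd.dvd.mul_left hprim t)
    rw [h1] at h2
    simpa using h2
  have htwo : (2 : Eisen) = ⟨2, 0⟩ := by
    have := intCast_eisen 2
    exact_mod_cast this
  rcases norm_one_units hnormt with h | h | h | h | h | h
  · rw [ht, h, mul_one]
  · exfalso
    rw [h, show (2:Eisen) * -1 + 1 = (⟨-1, 0⟩ : Eisen) from by rw [htwo]; ext <;> simp] at ht3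
    obtain ⟨h1, h2⟩ := (three_dvd_iff _).mp ht3
    have h1' : (3:ℤ) ∣ -1 := h1
    omega
  · exfalso
    rw [h, show (2:Eisen) * ω + 1 = (⟨1, 2⟩ : Eisen) from by rw [htwo]; ext <;> simp [ω]] at ht3
    obtain ⟨h1, h2⟩ := (three_dvd_iff _).mp ht3
    have h2' : (3:ℤ) ∣ 2 := h2
    omega
  · exfalso
    rw [h, show (2:Eisen) * -ω + 1 = (⟨1, -2⟩ : Eisen) from by rw [htwo]; ext <;> simp [ω]] at ht3
    obtain ⟨h1, h2⟩ := (three_dvd_iff _).mp ht3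
    have h2' : (3:ℤ) ∣ -2 := h2
    omega
  · exfalso
    rw [h, show (2:Eisen) * ⟨1,1⟩ + 1 = (⟨3, 2⟩ : Eisen) from by rw [htwo]; ext <;> simp] at ht3
    obtain ⟨h1, h2⟩ := (three_dvd_iff _).mp ht3
    have h2' : (3:ℤ) ∣ 2 := h2
    omega
  · exfalso
    rw [h, show (2:Eisen) * ⟨-1,-1⟩ + 1 = (⟨-1, -2⟩ : Eisen) from by rw [htwo]; ext <;> simp] at ht3
    obtain ⟨h1, h2⟩ := (three_dvd_iff _).mp ht3
    have h2' : (3:ℤ) ∣ -2 := h2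
    omega

end JacobiPi
end CubicRec
namespace CubicRec
open Eisen

lemma normE_omega_pow (k : ℕ) : normE ((ω : Eisen) ^ k) = 1 := by
  induction k with
  | zero => simp [normE]
  | succ m ih => rw [pow_succ, normE_mul, ih, one_mul]; simp [normE, ω]

lemma toC_omega_pow_mul_conj (k : ℕ) :
    toC ((ω : Eisen) ^ k) * (starRingEnd ℂ) (toC ((ω : Eisen) ^ k)) = 1 := by
  rw [← toC_conjE, ← map_mul, mul_conjE, normE_omega_pow]
  norm_num

section Bridge

variable {p : ℕ} {π : Eisen} [Fact p.Prime] (hn : normE π = (p : ℤ)) (hp3 : p % 3 = 1)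

include hn hp3

lemma cubicSym_eq_toC (hπ : Prime π) {α : Eisen} (hα : residue hn α ≠ 0) :
    cubicSym π α = toC (chiPi hn hp3 (residue hn α)) := by
  have hα' : ¬ π ∣ α := fun h => hα ((residue_eq_zero_iff hn hπ).mpr h)
  have hexp : ((normE π).toNat - 1) / 3 = (p - 1) / 3 := by
    rw [hn]
    simp
  have hdiv1 : π ∣ α ^ ((p - 1) / 3) - 1 ↔ residue hn α ^ ((p - 1) / 3) = 1 := by
    rw [← residue_eq_zero_iff hn hπ, map_sub, map_pow, map_one, sub_eq_zero]
  have hdivω : π ∣ α ^ ((p - 1) / 3) - ω ↔ residue hn α ^ ((p - 1) / 3) = cval π p := by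
    rw [← residue_eq_zero_iff hn hπ, map_sub, map_pow, residue_omega, sub_eq_zero]
  rw [cubicSym, hexp, if_neg hα', chiPi_apply_ne hn hp3 hα]
  unfold idx
  by_cases h1 : residue hn α ^ ((p - 1) / 3) = 1
  · rw [if_pos (hdiv1.mpr h1), if_pos h1, pow_zero, map_one]
  · rw [if_neg (fun hh => h1 (hdiv1.mp hh)), if_neg h1]
    by_cases h2 : residue hn α ^ ((p - 1) / 3) = cval π p
    · rw [if_pos (hdivω.mpr h2), if_pos h2, pow_one, toC_omega]
    · rw [if_neg (fun hh => h2 (hdivω.mp hh)), if_neg h2, map_pow, toC_omega]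

end Bridge
end CubicRec
open CubicRec in
open Eisen in
/-- **Cubic reciprocity for the distinguished characters.**
For distinct primes `p, r ≡ 1 (mod 3)` with standard decompositions `p = π·π̄` and
`r = ρ·ρ̄`, one has `χ_p(r) = conj(χ_r(p)) · (π/ρ)₃²`. -/
theorem chiP_reciprocity (p r : ℕ) (hp : p.Prime) (hr : r.Prime) (hpr : p ≠ r)
    (hp3 : p % 3 = 1) (hr3 : r % 3 = 1) (π ρ : Eisen)
    (hπ : IsStandardPrime π) (hρ : IsStandardPrime ρ)
    (hπp : normE π = (p : ℤ)) (hρr : normE ρ = (r : ℤ)) :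
    cubicSym π ((r : ℤ) : Eisen) =
      (starRingEnd ℂ) (cubicSym ρ ((p : ℤ) : Eisen)) * (cubicSym ρ π) ^ 2 := by
  classical
  haveI hfp : Fact p.Prime := ⟨hp⟩
  haveI hfr : Fact r.Prime := ⟨hr⟩
  haveI : Fact (Nat.Prime 3) := ⟨by norm_num⟩
  obtain ⟨hπprime, hπprim, -⟩ := hπ
  obtain ⟨hρprime, hρprim, -⟩ := hρ
  have hrp : residue hπp ((r : ℤ) : Eisen) = ((r : ℤ) : ZMod p) := map_intCast _ _
  have hpr' : residue hρr ((p : ℤ) : Eisen) = ((p : ℤ) : ZMod r) := map_intCast _ _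
  have hr0 : ((r : ℤ) : ZMod p) ≠ 0 := by
    rw [Ne, ZMod.intCast_zmod_eq_zero_iff_dvd]
    intro h
    have h' : p ∣ r := by exact_mod_cast h
    exact hpr ((Nat.prime_dvd_prime_iff_eq hp hr).mp h')
  have hp0 : ((p : ℤ) : ZMod r) ≠ 0 := by
    rw [Ne, ZMod.intCast_zmod_eq_zero_iff_dvd]
    intro h
    have h' : r ∣ p := by exact_mod_cast h
    exact hpr ((Nat.prime_dvd_prime_iff_eq hr hp).mp h').symm
  have hπ0 : residue hρr π ≠ 0 := by
    intro h
    have hd : ρ ∣ π := (residue_eq_zero_iff hρr hρprime).mp h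
    have hnd := normE_dvd hd
    rw [hρr, hπp] at hnd
    have h' : r ∣ p := by exact_mod_cast hnd
    exact hpr ((Nat.prime_dvd_prime_iff_eq hr hp).mp h').symm
  rw [cubicSym_eq_toC hπp hp3 hπprime (by rw [hrp]; exact hr0),
      cubicSym_eq_toC hρr hr3 hρprime (by rw [hpr']; exact hp0),
      cubicSym_eq_toC hρr hr3 hρprime hπ0]
  set u₁ : Eisen := chiPi hπp hp3 (residue hπp ((r : ℤ) : Eisen)) with hu₁
  set u₂ : Eisen := chiPi hρr hr3 (residue hρr ((p : ℤ) : Eisen)) with hu₂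
  set u₃ : Eisen := chiPi hρr hr3 (residue hρr π) with hu₃
  -- work in a big field of characteristic r
  have hcharne : ringChar (ZMod r) ≠ ringChar (ZMod p) := by
    rw [ZMod.ringChar_zmod_n, ZMod.ringChar_zmod_n]
    exact fun h => hpr h.symm
  set Ψ := AddChar.FiniteField.primitiveChar (ZMod p) (ZMod r) hcharne with hΨ
  set K := CyclotomicField Ψ.n (ZMod r) with hK
  haveI : CharP K r := charP_of_injective_algebraMap (algebraMap (ZMod r) K).injective r
  set φ : Eisen →+* K := (algebraMap (ZMod r) K).comp (residue hρr) with hφ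
  set χ : MulChar (ZMod p) K := (chiPi hπp hp3).ringHomComp φ with hχ
  have hinj : Function.Injective (algebraMap (ZMod r) K) := (algebraMap (ZMod r) K).injective
  have hχ3 : χ ^ 3 = 1 := by
    rw [hχ, MulChar.ringHomComp_pow, chiPi_cube hπp hp3]
    ext a
    simp [MulChar.ringHomComp_apply]
  have hζrne : cval ρ r ≠ 1 := cval_ne_one hρr hr3
  have hζr2ne : cval ρ r ^ 2 ≠ 1 := cval_sq_ne_one hρr hr3
  have hφω : ∀ k : ℕ, φ ((ω : Eisen) ^ k) = algebraMap (ZMod r) K (cval ρ r ^ k) := by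
    intro k
    rw [hφ, RingHom.comp_apply, map_pow, residue_omega, map_pow]
  have hχne : χ ≠ 1 := by
    obtain ⟨x, hx0, hxe⟩ := exists_nonresidue hπp hp3
    intro hone
    have hxu : IsUnit x := isUnit_iff_ne_zero.mpr hx0
    have h1 : χ x = 1 := by rw [hone]; exact MulChar.one_apply hxu
    rw [hχ, MulChar.ringHomComp_apply, chiPi_apply_ne hπp hp3 hx0, hφω] at h1
    have h2 : cval ρ r ^ idx π p x = 1 := hinj (h1.trans (map_one _).symm)
    unfold idx at h2
    split_ifs at h2 with hc1 hc2
    · exact hxe hc1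
    · rw [pow_one] at h2
      exact hζrne h2
    · exact hζr2ne h2
  have hord : orderOf χ = 3 := orderOf_eq_prime hχ3 hχne
  have hcard : ((Fintype.card (ZMod p) : ℕ) : K) = ((p : ℕ) : K) := by rw [ZMod.card]
  have hpK : ((p : ℕ) : K) ≠ 0 := by
    rw [Ne, CharP.cast_eq_zero_iff K r]
    intro h
    exact hpr ((Nat.prime_dvd_prime_iff_eq hr hp).mp h).symm
  have hgne : gaussSum χ Ψ.char ≠ 0 := by
    have hgg := gaussSum_mul_gaussSum_eq_card hχne Ψ.prim
    intro h0
    rw [h0, zero_mul] at hgg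
    exact hpK (by rw [← hcard, ← hgg])
  have hχm1 : χ (-1) = 1 := by
    have hm : ((-1 : ZMod p) * (-1)) = 1 := by ring
    have hsq : χ (-1) * χ (-1) = 1 := by rw [← map_mul, hm, MulChar.map_one]
    have hcb : χ (-1) ^ 3 = 1 := by
      rw [← MulChar.pow_apply' _ (by norm_num : (3 : ℕ) ≠ 0), hχ3,
        MulChar.one_apply isUnit_one.neg]
    calc χ (-1) = χ (-1) * (χ (-1) * χ (-1)) := by rw [hsq, mul_one]
      _ = χ (-1) ^ 3 := by ring
      _ = 1 := hcb
  have hJK : jacobiSum χ χ = φ π := by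
    rw [hχ, jacobiSum_ringHomComp, jacobiSum_eq_pi hπp hp3 hπprime hπprim]
  have hg3 : gaussSum χ Ψ.char ^ 3 = ((p : ℕ) : K) * φ π := by
    have hgs := gaussSum_pow_eq_prod_jacobiSum (χ := χ) (ψ := Ψ.char)
      (by rw [hord]; norm_num) Ψ.prim
    rw [hord] at hgs
    have h32 : (3 : ℕ) - 1 = 2 := rfl
    rw [h32] at hgs
    have hIco : Finset.Ico 1 2 = {1} := rfl
    rw [hIco, Finset.prod_singleton, pow_one, hJK, hχm1, one_mul, hcard] at hgs
    exact hgs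
  have hem := e_mul hρr hr3
  have hr31 : r = 3 * ((r - 1) / 3) + 1 := by
    have := hr.two_le
    omega
  have hχr : χ ^ r = χ := by
    have h1 : χ ^ r = (χ ^ 3) ^ ((r - 1) / 3) * χ := by
      rw [← pow_mul, ← pow_succ, ← hr31]
    rw [h1, hχ3, one_pow, one_mul]
  have hψr : Ψ.char ^ r = AddChar.mulShift Ψ.char ((r : ℕ) : ZMod p) :=
    AddChar.pow_mulShift _ r
  have hfrob : gaussSum χ Ψ.char ^ r =
      gaussSum χ (AddChar.mulShift Ψ.char ((r : ℕ) : ZMod p)) := by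
    rw [gaussSum_frob r χ Ψ.char, hχr, hψr]
  have hcop : Nat.Coprime r p := (Nat.coprime_primes hr hp).mpr fun h => hpr h.symm
  have hshift := gaussSum_mulShift χ Ψ.char (ZMod.unitOfCoprime r hcop)
  rw [show ((ZMod.unitOfCoprime r hcop : (ZMod p)ˣ) : ZMod p) = ((r : ℕ) : ZMod p)
    from ZMod.coe_unitOfCoprime r hcop] at hshift
  rw [← hfrob] at hshift
  have hgr : gaussSum χ Ψ.char ^ r =
      gaussSum χ Ψ.char * (((p : ℕ) : K) * φ π) ^ ((r - 1) / 3) := by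
    have h1 : gaussSum χ Ψ.char ^ r =
        (gaussSum χ Ψ.char ^ 3) ^ ((r - 1) / 3) * gaussSum χ Ψ.char := by
      rw [← pow_mul, ← pow_succ, ← hr31]
    rw [h1, hg3]
    ring
  rw [hgr] at hshift
  have hKmain : χ ((r : ℕ) : ZMod p) * (((p : ℕ) : K) * φ π) ^ ((r - 1) / 3) = 1 := by
    have h1 : (χ ((r : ℕ) : ZMod p) * (((p : ℕ) : K) * φ π) ^ ((r - 1) / 3)) * gaussSum χ Ψ.char
        = 1 * gaussSum χ Ψ.char := by
      rw [one_mul]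
      conv_rhs => rw [← hshift]
      ring
    exact mul_right_cancel₀ hgne h1
  -- descend to `ZMod r`
  have hargs : ((r : ℕ) : ZMod p) = residue hπp ((r : ℤ) : Eisen) := by
    rw [hrp]
    push_cast
    ring
  have hχr' : χ ((r : ℕ) : ZMod p) = algebraMap (ZMod r) K (residue hρr u₁) := by
    rw [hargs, hχ, MulChar.ringHomComp_apply, ← hu₁, hφ, RingHom.comp_apply]
  have hpφ : ((p : ℕ) : K) = algebraMap (ZMod r) K ((p : ZMod r)) := by
    rw [map_natCast]
  have hφπ : φ π = algebraMap (ZMod r) K (residue hρr π) := rfl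
  have hZr : residue hρr u₁ * ((p : ZMod r) * residue hρr π) ^ ((r - 1) / 3) = 1 := by
    apply hinj
    rw [map_mul, map_pow, map_mul, map_one, ← hχr', ← hpφ, ← hφπ]
    exact hKmain
  have hpcast : ((p : ℕ) : ZMod r) = ((p : ℤ) : ZMod r) := by push_cast; ring
  have h2 : ((p : ZMod r)) ^ ((r - 1) / 3) = residue hρr u₂ := by
    rw [hu₂, residue_chiPi hρr hr3, hpr', hpcast]
  have h3 : (residue hρr π) ^ ((r - 1) / 3) = residue hρr u₃ := by
    rw [hu₃, residue_chiPi hρr hr3]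
  rw [mul_pow, h2, h3] at hZr
  have key0 : residue hρr (u₁ * (u₂ * u₃)) = 1 := by
    rw [map_mul, map_mul]
    exact hZr
  -- lift the congruence to an equality of roots of unity in `Eisen`
  obtain ⟨k₁, hk₁⟩ : ∃ k, u₁ = (ω : Eisen) ^ k :=
    ⟨_, by rw [hu₁]; exact chiPi_apply_ne hπp hp3 (by rw [hrp]; exact hr0)⟩
  obtain ⟨k₂, hk₂⟩ : ∃ k, u₂ = (ω : Eisen) ^ k :=
    ⟨_, by rw [hu₂]; exact chiPi_apply_ne hρr hr3 (by rw [hpr']; exact hp0)⟩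
  obtain ⟨k₃, hk₃⟩ : ∃ k, u₃ = (ω : Eisen) ^ k :=
    ⟨_, by rw [hu₃]; exact chiPi_apply_ne hρr hr3 hπ0⟩
  have key : u₁ * (u₂ * u₃) = 1 := by
    have hN : u₁ * (u₂ * u₃) = (ω : Eisen) ^ (k₁ + (k₂ + k₃)) := by
      rw [hk₁, hk₂, hk₃, pow_add, pow_add]
    have hres : cval ρ r ^ (k₁ + (k₂ + k₃)) = 1 := by
      have hh := key0
      rw [hN, map_pow, residue_omega] at hh
      exact hh
    have hmodred : cval ρ r ^ (k₁ + (k₂ + k₃)) = cval ρ r ^ ((k₁ + (k₂ + k₃)) % 3) := by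
      conv_lhs => rw [← Nat.div_add_mod (k₁ + (k₂ + k₃)) 3]
      rw [pow_add, pow_mul, cval_cube hρr hr3, one_pow, one_mul]
    have hmod3 : cval ρ r ^ ((k₁ + (k₂ + k₃)) % 3) = cval ρ r ^ 0 := by
      rw [pow_zero, ← hmodred, hres]
    have hm0 : (k₁ + (k₂ + k₃)) % 3 = 0 :=
      cval_pow_inj hρr hr3 (Nat.mod_lt _ (by norm_num)) (by norm_num) hmod3
    rw [hN]
    conv_lhs => rw [← Nat.div_add_mod (k₁ + (k₂ + k₃)) 3]
    rw [pow_add, pow_mul, omega_cube, one_pow, hm0, pow_zero, mul_one]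
  -- final computation in ℂ
  have hcube₃ : u₃ ^ 3 = 1 := by
    rw [hk₃, ← pow_mul, mul_comm, pow_mul, omega_cube, one_pow]
  have hconj₂ : toC u₂ * (starRingEnd ℂ) (toC u₂) = 1 := by
    rw [hk₂]
    exact toC_omega_pow_mul_conj k₂
  have hprodC : toC u₁ * (toC u₂ * toC u₃) = 1 := by
    rw [← map_mul, ← map_mul, key, map_one]
  have hc0 : toC u₂ * toC u₃ ≠ 0 := by
    intro h
    rw [h, mul_zero] at hprodC
    exact one_ne_zero hprodC.symm
  have hrhs : ((starRingEnd ℂ) (toC u₂) * (toC u₃) ^ 2) * (toC u₂ * toC u₃) = 1 := by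
    have h33 : (toC u₃) ^ 3 = 1 := by rw [← map_pow, hcube₃, map_one]
    calc ((starRingEnd ℂ) (toC u₂) * (toC u₃) ^ 2) * (toC u₂ * toC u₃)
        = (toC u₂ * (starRingEnd ℂ) (toC u₂)) * (toC u₃) ^ 3 := by ring
      _ = 1 := by rw [hconj₂, h33, one_mul]
  exact mul_right_cancel₀ hc0 (hprodC.trans hrhs.symm)
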